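/- For every x ∈ ℝ⁴ with x_1² + x_2² + x_3² + x_4² = 1, one has 6 ≤ Σ_{1≤i<j≤4} ((x_i + x_j)⁶ + (x_i − x_j)⁶) ≤ 9. Moreover both bounds are attained: the lower bound at x = (1,0,0,0) and the upper bound at x = (1/√2, 1/√2, 0, 0). Equivalently, for every y ∈ ℝ⁴ with y_1,…,y_4 ≥ 0 and y_1 + y_2 + y_3 + y_4 = 1, one has 1 ≤ 5(y_1²+y_2²+y_3²+y_4²) − 4(y_1³+y_2³+y_3³+y_4³) ≤ 3/2. -/

import Mathlib

lemma F4_aux_expand_sum (f : Fin 4 → Fin 4 → ℝ) :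
    (∑ i : Fin 4, ∑ j : Fin 4, if i < j then f i j else 0) =
      f 0 1 + f 0 2 + f 0 3 + f 1 2 + f 1 3 + f 2 3 := by
  simp only [Fin.sum_univ_four,
    show ¬((0:Fin 4) < 0) from by decide, show ((0:Fin 4) < 1) from by decide,
    show ((0:Fin 4) < 2) from by decide, show ((0:Fin 4) < 3) from by decide,
    show ¬((1:Fin 4) < 0) from by decide, show ¬((1:Fin 4) < 1) from by decide,
    show ((1:Fin 4) < 2) from by decide, show ((1:Fin 4) < 3) from by decide,
    show ¬((2:Fin 4) < 0) from by decide, show ¬((2:Fin 4) < 1) from by decide,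
    show ¬((2:Fin 4) < 2) from by decide, show ((2:Fin 4) < 3) from by decide,
    show ¬((3:Fin 4) < 0) from by decide, show ¬((3:Fin 4) < 1) from by decide,
    show ¬((3:Fin 4) < 2) from by decide, show ¬((3:Fin 4) < 3) from by decide,
    if_true, if_false, ite_true, ite_false]
  ring

/-- Lower bound on the simplex: `5 s₂ - 4 s₃ ≥ 1`. -/
lemma F4_aux_low (a b c d : ℝ) (ha : 0 ≤ a) (hb : 0 ≤ b) (hc : 0 ≤ c) (hd : 0 ≤ d)
    (h : a + b + c + d = 1) :
    1 ≤ 5*(a^2+b^2+c^2+d^2) - 4*(a^3+b^3+c^3+d^3) := by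
  nlinarith [mul_nonneg ha (sq_nonneg (b-c)), mul_nonneg hb (sq_nonneg (a-c)),
    mul_nonneg hc (sq_nonneg (a-b)), mul_nonneg ha (sq_nonneg (b-d)),
    mul_nonneg hb (sq_nonneg (a-d)), mul_nonneg hd (sq_nonneg (a-b)),
    mul_nonneg ha (sq_nonneg (c-d)), mul_nonneg hc (sq_nonneg (a-d)),
    mul_nonneg hd (sq_nonneg (a-c)), mul_nonneg hb (sq_nonneg (c-d)),
    mul_nonneg hc (sq_nonneg (b-d)), mul_nonneg hd (sq_nonneg (b-c))]

/-- Superadditivity of `g(t) = 5t² - 4t³` for small arguments. -/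
lemma F4_aux_merge (u v : ℝ) (hu : 0 ≤ u) (hv : 0 ≤ v) (h : u + v ≤ 5/6) :
    5*u^2 - 4*u^3 + (5*v^2 - 4*v^3) ≤ 5*(u+v)^2 - 4*(u+v)^3 := by
  nlinarith [mul_nonneg (mul_nonneg hu hv) (by linarith : (0:ℝ) ≤ 5 - 6*(u+v))]

/-- Linear bound `g(t) ≤ (3/2) t` for `t ≤ 1/2`. -/
lemma F4_aux_small (t : ℝ) (ht : 0 ≤ t) (h : t ≤ 1/2) : 5*t^2 - 4*t^3 ≤ 3/2 * t := by
  nlinarith [mul_nonneg ht (mul_nonneg (by linarith : (0:ℝ) ≤ 1/2 - t)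
    (by linarith : (0:ℝ) ≤ 3/4 - t))]

/-- Two-variable case: `g(t) + g(1-t) ≤ 3/2`. -/
lemma F4_aux_final (t : ℝ) : 5*t^2 - 4*t^3 + (5*(1-t)^2 - 4*(1-t)^3) ≤ 3/2 := by
  nlinarith [sq_nonneg (2*t - 1)]

lemma F4_aux_bigcase (a b c d : ℝ) (hb : 0 ≤ b) (hc : 0 ≤ c) (hd : 0 ≤ d)
    (h : a + b + c + d = 1) (h2 : 1/2 < a) :
    5*(a^2+b^2+c^2+d^2) - 4*(a^3+b^3+c^3+d^3) ≤ 3/2 := by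
  have m1 := F4_aux_merge b c hb hc (by linarith)
  have m2 := F4_aux_merge (b+c) d (by linarith) hd (by linarith)
  have hbcd : b + c + d = 1 - a := by linarith
  rw [hbcd] at m2
  have f := F4_aux_final a
  linarith

/-- Upper bound on the simplex: `5 s₂ - 4 s₃ ≤ 3/2`. -/
lemma F4_aux_high (a b c d : ℝ) (ha : 0 ≤ a) (hb : 0 ≤ b) (hc : 0 ≤ c) (hd : 0 ≤ d)
    (h : a + b + c + d = 1) :
    5*(a^2+b^2+c^2+d^2) - 4*(a^3+b^3+c^3+d^3) ≤ 3/2 := by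
  rcases le_or_gt a (1/2) with ha2 | ha2
  · rcases le_or_gt b (1/2) with hb2 | hb2
    · rcases le_or_gt c (1/2) with hc2 | hc2
      · rcases le_or_gt d (1/2) with hd2 | hd2
        · have := F4_aux_small a ha ha2
          have := F4_aux_small b hb hb2
          have := F4_aux_small c hc hc2
          have := F4_aux_small d hd hd2
          linarith
        · linarith [F4_aux_bigcase d a b c ha hb hc (by linarith) hd2]
      · linarith [F4_aux_bigcase c a b d ha hb hd (by linarith) hc2]
    · linarith [F4_aux_bigcase b a c d ha hc hd (by linarith) hb2]
  · linarith [F4_aux_bigcase a b c d hb hc hd h ha2]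

/-- The extremal computation for `F₄` (proof of Theorem 1.2 for `F₄`): on the unit
sphere in `ℝ⁴` the degree-6 basic invariant
`π₂(x) = Σ_{i<j} ((xᵢ+xⱼ)⁶ + (xᵢ−xⱼ)⁶)` satisfies `6 ≤ π₂(x) ≤ 9`, with the bounds
attained at `(1,0,0,0)` and `(1/√2,1/√2,0,0)`; equivalently, on the standard
`3`-simplex `1 ≤ 5·s₂(y) − 4·s₃(y) ≤ 3/2`. -/
theorem F4_invariant_extrema :
    (∀ x : Fin 4 → ℝ, (∑ i, x i ^ 2) = 1 →
      6 ≤ (∑ i : Fin 4, ∑ j : Fin 4,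
            if i < j then (x i + x j) ^ 6 + (x i - x j) ^ 6 else 0) ∧
      (∑ i : Fin 4, ∑ j : Fin 4,
            if i < j then (x i + x j) ^ 6 + (x i - x j) ^ 6 else 0) ≤ 9) ∧
    ((∑ i : Fin 4, ∑ j : Fin 4,
        if i < j then ((![1,0,0,0] : Fin 4 → ℝ) i + ![1,0,0,0] j) ^ 6 +
          ((![1,0,0,0] : Fin 4 → ℝ) i - ![1,0,0,0] j) ^ 6 else 0) = 6) ∧
    ((∑ i : Fin 4, ∑ j : Fin 4,
        if i < j then
          ((![1/Real.sqrt 2, 1/Real.sqrt 2, 0, 0] : Fin 4 → ℝ) i +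
            ![1/Real.sqrt 2, 1/Real.sqrt 2, 0, 0] j) ^ 6 +
          ((![1/Real.sqrt 2, 1/Real.sqrt 2, 0, 0] : Fin 4 → ℝ) i -
            ![1/Real.sqrt 2, 1/Real.sqrt 2, 0, 0] j) ^ 6 else 0) = 9) ∧
    (∀ y : Fin 4 → ℝ, (∀ i, 0 ≤ y i) → (∑ i, y i) = 1 →
      1 ≤ 5 * (∑ i, y i ^ 2) - 4 * (∑ i, y i ^ 3) ∧
      5 * (∑ i, y i ^ 2) - 4 * (∑ i, y i ^ 3) ≤ 3 / 2) := by
  refine ⟨?_, ?_, ?_, ?_⟩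
  · intro x hx
    simp only [Fin.sum_univ_four] at hx
    have key : (∑ i : Fin 4, ∑ j : Fin 4,
        if i < j then (x i + x j) ^ 6 + (x i - x j) ^ 6 else 0) =
        6 * (5 * ((x 0^2)^2 + (x 1^2)^2 + (x 2^2)^2 + (x 3^2)^2)
          - 4 * ((x 0^2)^3 + (x 1^2)^3 + (x 2^2)^3 + (x 3^2)^3)) := by
      rw [F4_aux_expand_sum]
      linear_combination (30*((x 0^2)^2+(x 1^2)^2+(x 2^2)^2+(x 3^2)^2)) * hx
    rw [key]
    have hlo := F4_aux_low (x 0^2) (x 1^2) (x 2^2) (x 3^2)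
      (sq_nonneg _) (sq_nonneg _) (sq_nonneg _) (sq_nonneg _) hx
    have hhi := F4_aux_high (x 0^2) (x 1^2) (x 2^2) (x 3^2)
      (sq_nonneg _) (sq_nonneg _) (sq_nonneg _) (sq_nonneg _) hx
    constructor <;> linarith
  · rw [F4_aux_expand_sum]
    norm_num [Matrix.cons_val_two, Matrix.cons_val_three, Matrix.vecHead, Matrix.vecTail]
  · rw [F4_aux_expand_sum]
    have h : Real.sqrt 2 ^ 2 = 2 := Real.sq_sqrt (by norm_num)
    have h0 : Real.sqrt 2 ≠ 0 := by positivity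
    norm_num [Matrix.cons_val_two, Matrix.cons_val_three, Matrix.vecHead, Matrix.vecTail]
    field_simp
    linear_combination (-9 * Real.sqrt 2 ^ 4 - 18 * Real.sqrt 2 ^ 2 - 36) * h
  · intro y hy hsum
    simp only [Fin.sum_univ_four] at hsum ⊢
    exact ⟨F4_aux_low (y 0) (y 1) (y 2) (y 3) (hy 0) (hy 1) (hy 2) (hy 3) hsum,
      F4_aux_high (y 0) (y 1) (y 2) (y 3) (hy 0) (hy 1) (hy 2) (hy 3) hsum⟩
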